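/- A Z²-subshift X ⊆ A^{Z²} is linearly block gluing if and only if there exist a function f : ℕ → ℕ with f(n) ≤ C·n for all n (for some constant C > 0), an integer c ≥ 2 and m ∈ ℕ such that for every l ≥ 0, {u ∈ Z² : ‖u‖∞ ≥ f(c^l + m) + c^l + m} ⊆ Δ_X(c^l + m). -/

import Mathlib

open Filter

abbrev Config (A : Type*) := ℤ × ℤ → A

def shiftC {A : Type*} (u : ℤ × ℤ) (x : Config A) : Config A := fun v => x (v + u)

def blockAt {A : Type*} (x : Config A) (u : ℤ × ℤ) (n : ℕ) : Fin n × Fin n → A :=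
  fun v => x (u + (((v.1 : ℕ) : ℤ), ((v.2 : ℕ) : ℤ)))

def IsSFT {A : Type*} (X : Set (Config A)) : Prop :=
  ∃ (r : ℕ) (F : Set (Fin r × Fin r → A)),
    X = {x : Config A | ∀ u : ℤ × ℤ, blockAt x u r ∉ F}

def Lang {A : Type*} (X : Set (Config A)) (n : ℕ) : Set (Fin n × Fin n → A) :=
  {p | ∃ x ∈ X, ∃ u : ℤ × ℤ, blockAt x u n = p}

def gluingSet {A : Type*} (X : Set (Config A)) {n : ℕ}
    (p q : Fin n × Fin n → A) : Set (ℤ × ℤ) :=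
  {u | ∃ x ∈ X, blockAt x 0 n = q ∧ blockAt x u n = p}

def normInf (u : ℤ × ℤ) : ℤ := max |u.1| |u.2|

def BlockGluing {A : Type*} (X : Set (Config A)) (f : ℕ → ℕ) : Prop :=
  ∀ n : ℕ, 1 ≤ n → ∀ p ∈ Lang X n, ∀ q ∈ Lang X n, ∀ u : ℤ × ℤ,
    (f n : ℤ) + (n : ℤ) ≤ normInf u → u ∈ gluingSet X p q

def IsSubshift {A : Type*} [TopologicalSpace A] (X : Set (Config A)) : Prop :=
  IsClosed X ∧ ∀ (u : ℤ × ℤ) (x : Config A), x ∈ X → shiftC u x ∈ X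

def LinearlyBlockGluing {A : Type*} (X : Set (Config A)) : Prop :=
  ∃ g : ℕ → ℕ, Monotone g ∧ (∃ C : ℝ, 0 < C ∧ ∀ n : ℕ, (g n : ℝ) ≤ C * (n : ℝ)) ∧
    BlockGluing X g


lemma exists_pow_add (c m : ℕ) (hc : 2 ≤ c) (n : ℕ) : ∃ l, n ≤ c ^ l + m := by
  refine ⟨n, le_trans ?_ (Nat.le_add_right _ _)⟩
  calc n ≤ 2 ^ n := Nat.le_of_lt (Nat.lt_two_pow_self (n := n))
    _ ≤ c ^ n := Nat.pow_le_pow_left hc n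

lemma lang_extend {A : Type} (X : Set (Config A)) {n N : ℕ} (h : n ≤ N)
    {p : Fin n × Fin n → A} (hp : p ∈ Lang X n) :
    ∃ P ∈ Lang X N, ∀ v : Fin n × Fin n,
      P (Fin.castLE h v.1, Fin.castLE h v.2) = p v := by
  obtain ⟨x, hx, u, hxu⟩ := hp
  refine ⟨blockAt x u N, ⟨x, hx, u, rfl⟩, fun v => ?_⟩
  rw [← hxu]; rfl

/-- A Z²-subshift is linearly block gluing iff the block gluing inclusion holds along some
exponentially growing sequence of sizes `c^l + m`. -/
theorem stmt8 {A : Type} [Fintype A] [TopologicalSpace A] [DiscreteTopology A]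
    (X : Set (Config A)) (hX : IsSubshift X) :
    LinearlyBlockGluing X ↔
      ∃ (f : ℕ → ℕ) (C : ℝ) (c m : ℕ), 0 < C ∧ (∀ n : ℕ, (f n : ℝ) ≤ C * (n : ℝ)) ∧
        2 ≤ c ∧
        ∀ l : ℕ, ∀ p ∈ Lang X (c ^ l + m), ∀ q ∈ Lang X (c ^ l + m), ∀ u : ℤ × ℤ,
          (f (c ^ l + m) : ℤ) + ((c ^ l + m : ℕ) : ℤ) ≤ normInf u →
          u ∈ gluingSet X p q := by
  constructor
  · rintro ⟨g, hmono, ⟨C, hC, hlin⟩, hbg⟩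
    refine ⟨g, C, 2, 0, hC, hlin, le_refl 2, fun l p hp q hq u hu => ?_⟩
    exact hbg _ (Nat.one_le_iff_ne_zero.mpr (by positivity)) p hp q hq u hu
  · rintro ⟨f, C, c, m, hC, hf, hc, hglue⟩
    set L : ℕ → ℕ := fun n => Nat.find (exists_pow_add c m hc n) with hL
    set N : ℕ → ℕ := fun n => c ^ L n + m with hN
    have hNn : ∀ n, n ≤ N n := fun n => Nat.find_spec (exists_pow_add c m hc n)
    have hLmono : Monotone L := by
      intro a b hab
      exact Nat.find_min' _ (le_trans hab (hNn b))
    have hNmono : Monotone N := by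
      intro a b hab
      exact Nat.add_le_add_right (Nat.pow_le_pow_right (by omega) (hLmono hab)) m
    have hNbound : ∀ n, 1 ≤ n → N n ≤ (c + m) * n := by
      intro n hn
      rcases Nat.eq_zero_or_pos (L n) with h0 | hpos
      · simp only [hN, h0, pow_zero]
        nlinarith
      · obtain ⟨k, hk⟩ := Nat.exists_eq_succ_of_ne_zero (Nat.pos_iff_ne_zero.mp hpos)
        have hmin : ¬ (n ≤ c ^ k + m) :=
          Nat.find_min (exists_pow_add c m hc n) (show k < L n by omega)
        have hk' : c ^ k < n := by omega
        have : N n = c * c ^ k + m := by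
          simp only [hN, hk, pow_succ]; ring
        rw [this]
        have h1 : c * c ^ k ≤ c * (n - 1) := Nat.mul_le_mul_left c (by omega)
        nlinarith
    refine ⟨fun n => (Finset.range n).sup (fun i => f (N (i + 1)) + N (i + 1)),
      fun a b hab => Finset.sup_mono (Finset.range_subset_range.mpr hab),
      ⟨(C + 1) * (c + m), by positivity, ?_⟩, ?_⟩
    · intro n
      rcases Nat.eq_zero_or_pos n with h0 | hn
      · simp [h0]
      · obtain ⟨i, hi, hsup⟩ := Finset.exists_mem_eq_sup (Finset.range n)
          ⟨0, Finset.mem_range.mpr hn⟩ (fun i => f (N (i + 1)) + N (i + 1))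
        dsimp only
        rw [hsup]
        have hb1 : (f (N (i + 1)) : ℝ) ≤ C * (N (i + 1)) := hf _
        have hb2 : (N (i + 1) : ℝ) ≤ (c + m) * (i + 1) := by
          exact_mod_cast hNbound (i + 1) (by omega)
        have hb3 : ((i : ℝ) + 1) ≤ n := by
          have := Finset.mem_range.mp hi
          exact_mod_cast this
        have hcm : (1 : ℝ) ≤ ((c : ℝ) + m) := by
          have h2 : (2 : ℝ) ≤ (c : ℝ) := by exact_mod_cast hc
          have hm : (0 : ℝ) ≤ (m : ℝ) := Nat.cast_nonneg m
          linarith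
        have hCp : (0 : ℝ) ≤ C + 1 := by linarith
        push_cast
        calc (f (N (i + 1)) : ℝ) + (N (i + 1) : ℝ) ≤ (C + 1) * (N (i + 1)) := by nlinarith
          _ ≤ (C + 1) * (((c : ℝ) + m) * ((i : ℝ) + 1)) := mul_le_mul_of_nonneg_left hb2 hCp
          _ ≤ (C + 1) * (((c : ℝ) + m) * (n : ℝ)) := by
              have hh := mul_le_mul_of_nonneg_left hb3
                (mul_nonneg hCp (by linarith : (0 : ℝ) ≤ (c : ℝ) + m))
              nlinarith [hh]
          _ = (C + 1) * ((c : ℝ) + m) * (n : ℝ) := by ring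
    · intro n hn p hp q hq u hu
      have hstep : f (N n) + N n ≤ (Finset.range n).sup (fun i => f (N (i + 1)) + N (i + 1)) := by
        have hmem : n - 1 ∈ Finset.range n := Finset.mem_range.mpr (by omega)
        have h' : f (N (n - 1 + 1)) + N (n - 1 + 1) ≤
            (Finset.range n).sup (fun i => f (N (i + 1)) + N (i + 1)) :=
          Finset.le_sup (f := fun i => f (N (i + 1)) + N (i + 1)) hmem
        rwa [show n - 1 + 1 = n from by omega] at h'
      have hdist : (f (N n) : ℤ) + (N n : ℤ) ≤ normInf u := by
        have h1 : ((f (N n) + N n : ℕ) : ℤ) ≤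
            (((Finset.range n).sup (fun i => f (N (i + 1)) + N (i + 1)) : ℕ) : ℤ) := by
          exact_mod_cast hstep
        dsimp only at hu
        push_cast at h1
        linarith [hu, Int.ofNat_nonneg n]
      obtain ⟨P, hP, hPp⟩ := lang_extend X (hNn n) hp
      obtain ⟨Q, hQ, hQq⟩ := lang_extend X (hNn n) hq
      have hres : u ∈ gluingSet X P Q := by
        apply hglue (L n) P hP Q hQ u
        exact hdist
      obtain ⟨x, hx, hxQ, hxP⟩ := hres
      refine ⟨x, hx, ?_, ?_⟩
      · funext v
        have : blockAt x 0 n v = Q (Fin.castLE (hNn n) v.1, Fin.castLE (hNn n) v.2) := by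
          rw [← hxQ]; rfl
        rw [this, hQq]
      · funext v
        have : blockAt x u n v = P (Fin.castLE (hNn n) v.1, Fin.castLE (hNn n) v.2) := by
          rw [← hxP]; rfl
        rw [this, hPp]
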